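/- arXiv:1809.07376 — 3 statements merged into one kernel-verified Lean document; each statement's English description precedes it below -/
import Mathlib

section
/- Optimality conditions generated by the aggregate ADMM subproblem. Let f : ℝ^n → (−∞, +∞] be convex, closed, and proper, let K ⊆ ℝ^m be a nonempty closed convex cone, let A : ℝ^n → ℝ^m be linear, r ∈ ℝ^m, and γ > 0. Suppose (x̂, t̂) is a global minimizer over (x, t) ∈ ℝ^n × K of f(x) + (1/(2γ)) ‖A x + r − t‖², and set ŷ := (1/γ) Π_{K∘}(A x̂ + r). Then: (i) t̂ = Π_K(A x̂ + r) ∈ K; (ii) −Aᵀ ŷ ∈ ∂f(x̂); and (iii) ŷ ∈ N_K(t̂). -/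
open Filter Topology RealInnerProductSpace

open Classical in
/-- Euclidean projection onto a set (well-defined on nonempty closed convex sets). -/
noncomputable def projSet {E : Type*} [NormedAddCommGroup E] [InnerProductSpace ℝ E]
    (C : Set E) (z : E) : E :=
  if h : ∃ p ∈ C, ∀ q ∈ C, ‖z - p‖ ≤ ‖z - q‖ then h.choose else z

/-- Polar cone of a set. -/
def polarSet {E : Type*} [NormedAddCommGroup E] [InnerProductSpace ℝ E] (C : Set E) : Set E :=
  {y | ∀ x ∈ C, ⟪x, y⟫ ≤ 0}

/-- Normal cone of a convex set `C` at a point `x`. -/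
def nCone {E : Type*} [NormedAddCommGroup E] [InnerProductSpace ℝ E]
    (C : Set E) (x : E) : Set E :=
  {u | ∀ w ∈ C, ⟪u, w - x⟫ ≤ 0}

/-- Convex (Fenchel) conjugate of an extended-real-valued function. -/
noncomputable def econj {E : Type*} [NormedAddCommGroup E] [InnerProductSpace ℝ E]
    (f : E → EReal) (y : E) : EReal :=
  ⨆ x, ((⟪y, x⟫ : ℝ) : EReal) - f x

open Classical in
/-- Extended-real-valued indicator function of a set. -/
noncomputable def eindicator {E : Type*} (C : Set E) (y : E) : EReal :=
  if y ∈ C then 0 else ⊤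

/-- Subdifferential of an extended-real-valued function. -/
def ESubdiff {E : Type*} [NormedAddCommGroup E] [InnerProductSpace ℝ E]
    (f : E → EReal) (x : E) : Set E :=
  {u | ∀ v, f x + ((⟪u, v - x⟫ : ℝ) : EReal) ≤ f v}

/-- Convexity of an extended-real-valued function. -/
def EConvexFn {E : Type*} [AddCommMonoid E] [Module ℝ E] (f : E → EReal) : Prop :=
  ∀ x y : E, ∀ a b : ℝ, 0 ≤ a → 0 ≤ b → a + b = 1 →
    f (a • x + b • y) ≤ (a : EReal) * f x + (b : EReal) * f y

/-- Properness of an extended-real-valued function. -/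
def EProper {E : Type*} (f : E → EReal) : Prop :=
  (∀ x, f x ≠ ⊥) ∧ ∃ x, f x ≠ ⊤

private lemma min_VI {E : Type*} [NormedAddCommGroup E] [InnerProductSpace ℝ E]
    {C : Set E} (hC : Convex ℝ C) {z a : E} (ha : a ∈ C)
    (hm : ∀ q ∈ C, ‖z - a‖ ≤ ‖z - q‖) : ∀ w ∈ C, ⟪z - a, w - a⟫ ≤ 0 := by
  haveI : Nonempty C := ⟨⟨a, ha⟩⟩
  have h1 : ‖z - a‖ = ⨅ w : C, ‖z - w‖ := by
    refine le_antisymm (le_ciInf fun w => hm w w.2) ?_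
    exact ciInf_le ⟨0, by rintro x ⟨w, rfl⟩; exact norm_nonneg _⟩ (⟨a, ha⟩ : C)
  exact (norm_eq_iInf_iff_real_inner_le_zero hC ha).mp h1

private lemma projSet_eq {E : Type*} [NormedAddCommGroup E] [InnerProductSpace ℝ E]
    {C : Set E} (hC : Convex ℝ C) {z a : E} (ha : a ∈ C)
    (hm : ∀ q ∈ C, ‖z - a‖ ≤ ‖z - q‖) : projSet C z = a := by
  have hex : ∃ p ∈ C, ∀ q ∈ C, ‖z - p‖ ≤ ‖z - q‖ := ⟨a, ha, hm⟩
  rw [projSet, dif_pos hex]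
  obtain ⟨hpC, hpm⟩ := hex.choose_spec
  set p := hex.choose with hp
  have h1 := min_VI hC hpC hpm a ha
  have h2 := min_VI hC ha hm p hpC
  have key : ⟪a - p, a - p⟫ ≤ 0 := by
    have e : (⟪z - p, a - p⟫ : ℝ) + ⟪z - a, p - a⟫ = ⟪a - p, a - p⟫ := by
      rw [show p - a = -(a - p) from (neg_sub a p).symm, inner_neg_right, ← sub_eq_add_neg,
        ← inner_sub_left]
      congr 1
      abel
    linarith
  have : a - p = 0 := real_inner_self_nonpos.mp key
  have : a = p := by rwa [sub_eq_zero] at this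
  exact this.symm

private lemma div_step {s a b u w D k : ℝ} (hs : 0 < s)
    (h : a + k * u ≤ (1 - s) * a + s * b + k * (u + 2 * (s * w) + s ^ 2 * D)) :
    a ≤ b + 2 * k * w + k * s * D := by
  have h1 : s * (a - (b + 2 * k * w + k * s * D)) ≤ s * 0 := by nlinarith [h]
  have h2 := le_of_mul_le_mul_left h1 hs
  linarith

set_option maxHeartbeats 2000000 in
/-- **Optimality conditions generated by the aggregate ADMM subproblem.**
If `(x̂, t̂)` minimizes `f(x) + (1/(2γ))‖Ax + r − t‖²` over `ℝⁿ × K` and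
`ŷ := (1/γ) Π_{K∘}(A x̂ + r)`, then `t̂ = Π_K(A x̂ + r) ∈ K`, `−Aᵀ ŷ ∈ ∂f(x̂)`,
and `ŷ ∈ N_K(t̂)`. -/
theorem aggregate_subproblem_optimality {n m : ℕ}
    (f : EuclideanSpace ℝ (Fin n) → EReal)
    (hconv : EConvexFn f) (hlsc : LowerSemicontinuous f) (hproper : EProper f)
    (K : Set (EuclideanSpace ℝ (Fin m)))
    (hne : K.Nonempty) (hcl : IsClosed K) (hKconv : Convex ℝ K)
    (hcone : ∀ c : ℝ, 0 < c → ∀ x ∈ K, c • x ∈ K)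
    (A : EuclideanSpace ℝ (Fin n) →ₗ[ℝ] EuclideanSpace ℝ (Fin m))
    (r : EuclideanSpace ℝ (Fin m)) (γ : ℝ) (hγ : 0 < γ)
    (xh : EuclideanSpace ℝ (Fin n)) (th : EuclideanSpace ℝ (Fin m))
    (hthK : th ∈ K)
    (hmin : ∀ x, ∀ t ∈ K,
      f xh + (((1 / (2 * γ)) * ‖A xh + r - th‖ ^ 2 : ℝ) : EReal)
        ≤ f x + (((1 / (2 * γ)) * ‖A x + r - t‖ ^ 2 : ℝ) : EReal)) :
    th = projSet K (A xh + r) ∧ th ∈ K ∧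
    -(LinearMap.adjoint A ((1 / γ) • projSet (polarSet K) (A xh + r))) ∈ ESubdiff f xh ∧
    (1 / γ) • projSet (polarSet K) (A xh + r) ∈ nCone K th := by
  set z := A xh + r with hz
  have hκ : (0:ℝ) < 1 / (2 * γ) := by positivity
  -- f xh is finite
  have hfxh_bot : f xh ≠ ⊥ := hproper.1 xh
  have hfxh_top : f xh ≠ ⊤ := by
    intro htop
    obtain ⟨x0, hx0⟩ := hproper.2
    have h := hmin x0 th hthK
    rw [htop, EReal.top_add_coe] at h
    obtain ⟨c, hc⟩ : ∃ c : ℝ, f x0 = (c : EReal) :=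
      ⟨(f x0).toReal, (EReal.coe_toReal hx0 (hproper.1 x0)).symm⟩
    rw [hc, ← EReal.coe_add] at h
    exact (EReal.coe_ne_top _) (top_le_iff.mp h)
  obtain ⟨a, ha⟩ : ∃ a : ℝ, f xh = (a : EReal) :=
    ⟨(f xh).toReal, (EReal.coe_toReal hfxh_top hfxh_bot).symm⟩
  -- th minimizes distance to K
  have hdist : ∀ t ∈ K, ‖z - th‖ ≤ ‖z - t‖ := by
    intro t ht
    have h := hmin xh t ht
    rw [ha, ← EReal.coe_add, ← EReal.coe_add, EReal.coe_le_coe_iff] at h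
    have h2 : ‖z - th‖ ^ 2 ≤ ‖z - t‖ ^ 2 := by
      have := (mul_le_mul_iff_right₀ hκ).mp (by linarith : (1/(2*γ)) * ‖z - th‖ ^ 2 ≤ (1/(2*γ)) * ‖z - t‖ ^ 2)
      linarith
    exact (pow_le_pow_iff_left₀ (norm_nonneg _) (norm_nonneg _) two_ne_zero).mp h2
  have hVI : ∀ w ∈ K, ⟪z - th, w - th⟫ ≤ 0 := min_VI hKconv hthK hdist
  have hproj1 : projSet K z = th := projSet_eq hKconv hthK hdist
  -- orthogonality
  have horth : ⟪z - th, th⟫ = 0 := by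
    have h2 : ⟪z - th, th⟫ ≤ 0 := by
      have h := hVI ((2:ℝ) • th) (hcone 2 two_pos th hthK)
      have e : (2:ℝ) • th - th = th := by module
      rwa [e] at h
    have h3 : (0:ℝ) ≤ ⟪z - th, th⟫ := by
      have h := hVI (((1:ℝ)/2) • th) (hcone (1/2) (by norm_num) th hthK)
      have e : ((1:ℝ)/2) • th - th = (-(1/2) : ℝ) • th := by module
      rw [e, real_inner_smul_right] at h
      linarith
    linarith
  -- polar set is convex
  have hpolarconv : Convex ℝ (polarSet K) := by
    intro y1 hy1 y2 hy2 c b hc hb hcb w hw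
    have h1 := hy1 w hw
    have h2 := hy2 w hw
    show ⟪w, c • y1 + b • y2⟫ ≤ 0
    rw [inner_add_right, real_inner_smul_right, real_inner_smul_right]
    nlinarith
  -- z - th belongs to the polar set
  have hqmem : z - th ∈ polarSet K := by
    intro w hw
    have h1 := hVI w hw
    have e : (⟪z - th, w⟫ : ℝ) = ⟪z - th, w - th⟫ + ⟪z - th, th⟫ := by
      rw [← inner_add_right, sub_add_cancel]
    have : (⟪z - th, w⟫ : ℝ) ≤ 0 := by rw [e, horth]; linarith
    rwa [real_inner_comm]
  -- z - th minimizes distance to polar set from z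
  have hqmin : ∀ q ∈ polarSet K, ‖z - (z - th)‖ ≤ ‖z - q‖ := by
    intro q hq
    have h1 : z - (z - th) = th := by abel
    rw [h1]
    have hth_q : ⟪th, q⟫ ≤ 0 := hq th hthK
    have hth_zth : (⟪th, z - th⟫ : ℝ) = 0 := by rw [real_inner_comm]; exact horth
    have expand : ‖z - q‖ ^ 2 = ‖th‖ ^ 2 + 2 * ⟪th, (z - th) - q⟫ + ‖(z - th) - q‖ ^ 2 := by
      have e : z - q = th + ((z - th) - q) := by abel
      rw [e, norm_add_sq_real]
    have einner : (⟪th, (z - th) - q⟫ : ℝ) = ⟪th, z - th⟫ - ⟪th, q⟫ := inner_sub_right _ _ _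
    have h2 : ‖th‖ ^ 2 ≤ ‖z - q‖ ^ 2 := by
      rw [expand, einner, hth_zth]
      nlinarith [sq_nonneg ‖(z - th) - q‖]
    exact (pow_le_pow_iff_left₀ (norm_nonneg _) (norm_nonneg _) two_ne_zero).mp h2
  have hproj2 : projSet (polarSet K) z = z - th := projSet_eq hpolarconv hqmem hqmin
  refine ⟨hproj1.symm, hthK, ?_, ?_⟩
  · -- subdifferential condition
    rw [hproj2]
    intro v
    by_cases hfv : f v = ⊤
    · rw [hfv]; exact le_top
    obtain ⟨b, hb⟩ : ∃ b : ℝ, f v = (b : EReal) :=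
      ⟨(f v).toReal, (EReal.coe_toReal hfv (hproper.1 v)).symm⟩
    rw [ha, hb, ← EReal.coe_add, EReal.coe_le_coe_iff]
    set d := A v - A xh with hd
    have hinner : (⟪-(LinearMap.adjoint A ((1 / γ) • (z - th))), v - xh⟫ : ℝ)
        = -((1 / γ) * ⟪z - th, d⟫) := by
      rw [inner_neg_left, LinearMap.adjoint_inner_left, real_inner_smul_left, map_sub]
    rw [hinner]
    have hγ0 : γ ≠ 0 := ne_of_gt hγ
    have hk : (1:ℝ) / γ = 2 * (1 / (2 * γ)) := by field_simp
    rw [hk]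
    by_contra hcon
    push_neg at hcon
    set ε : ℝ := (a + -(2 * (1 / (2 * γ)) * ⟪z - th, d⟫) - b) / 2 with hε
    have hε0 : 0 < ε := by rw [hε]; linarith
    set s : ℝ := min 1 (ε * (2 * γ) / (‖d‖ ^ 2 + 1)) with hs
    have hs0 : 0 < s := lt_min one_pos (by positivity)
    have hs1 : s ≤ 1 := min_le_left _ _
    -- convexity bound on f at the perturbed point
    have hc := hconv xh v (1 - s) s (by linarith) hs0.le (by ring)
    have hc' : f ((1 - s) • xh + s • v) ≤ (((1 - s) * a + s * b : ℝ) : EReal) := by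
      calc f ((1 - s) • xh + s • v) ≤ ((1 - s : ℝ) : EReal) * f xh + ((s : ℝ) : EReal) * f v := hc
      _ = (((1 - s) * a + s * b : ℝ) : EReal) := by
          rw [ha, hb, ← EReal.coe_mul, ← EReal.coe_mul, ← EReal.coe_add]
    have hm2 := hmin ((1 - s) • xh + s • v) th hthK
    have hAs : A ((1 - s) • xh + s • v) + r - th = (z - th) + s • d := by
      rw [map_add, map_smul, map_smul, hz, hd]
      module
    rw [hAs] at hm2
    have hnorm : ‖(z - th) + s • d‖ ^ 2
        = ‖z - th‖ ^ 2 + 2 * (s * ⟪z - th, d⟫) + s ^ 2 * ‖d‖ ^ 2 := by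
      rw [norm_add_sq_real, real_inner_smul_right, norm_smul, Real.norm_eq_abs,
        abs_of_pos hs0, mul_pow]
    have hchain : ((a + (1 / (2 * γ)) * ‖z - th‖ ^ 2 : ℝ) : EReal)
        ≤ (((1 - s) * a + s * b + (1 / (2 * γ)) * ‖(z - th) + s • d‖ ^ 2 : ℝ) : EReal) := by
      rw [EReal.coe_add, ← ha]
      calc f xh + (((1 / (2 * γ)) * ‖z - th‖ ^ 2 : ℝ) : EReal)
          ≤ f ((1 - s) • xh + s • v)
            + (((1 / (2 * γ)) * ‖(z - th) + s • d‖ ^ 2 : ℝ) : EReal) := hm2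
        _ ≤ (((1 - s) * a + s * b : ℝ) : EReal)
            + (((1 / (2 * γ)) * ‖(z - th) + s • d‖ ^ 2 : ℝ) : EReal) :=
            add_le_add_left hc' _
        _ = _ := by rw [← EReal.coe_add]
    rw [EReal.coe_le_coe_iff, hnorm] at hchain
    have h5 := div_step hs0 hchain
    have h6 : (1 / (2 * γ)) * s * ‖d‖ ^ 2 ≤ ε := by
      have hsle : s ≤ ε * (2 * γ) / (‖d‖ ^ 2 + 1) := min_le_right _ _
      have h7 : (1 / (2 * γ)) * s * ‖d‖ ^ 2
          ≤ (1 / (2 * γ)) * (ε * (2 * γ) / (‖d‖ ^ 2 + 1)) * ‖d‖ ^ 2 := by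
        apply mul_le_mul_of_nonneg_right _ (by positivity)
        exact mul_le_mul_of_nonneg_left hsle (by positivity)
      have h8 : (1 / (2 * γ)) * (ε * (2 * γ) / (‖d‖ ^ 2 + 1)) * ‖d‖ ^ 2
          = ε * ‖d‖ ^ 2 / (‖d‖ ^ 2 + 1) := by
        field_simp
      have h9 : ε * ‖d‖ ^ 2 / (‖d‖ ^ 2 + 1) ≤ ε := by
        rw [div_le_iff₀ (by positivity)]
        nlinarith [sq_nonneg ‖d‖]
      rw [h8] at h7
      linarith
    linarith [h5, h6, hcon]
  · -- normal cone condition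
    rw [hproj2]
    intro w hw
    have h1 := hVI w hw
    show ⟪(1 / γ) • (z - th), w - th⟫ ≤ 0
    rw [real_inner_smul_left]
    have : (0:ℝ) ≤ 1 / γ := by positivity
    exact mul_nonpos_of_nonneg_of_nonpos this h1
end

section
/- Asymptotic primal feasibility of the aggregate dual consensus ADMM. Let ρ > 0 and suppose, for each i ∈ 𝒩, the sequences satisfy p_i^0 = 0 and, for all k ≥ 0: p_i^{k+1} = p_i^k + ρ ∑_{j∈𝒩_i} (y_i^k − y_j^k); r_i^{k+1} = ρ ∑_{j∈𝒩_i} (y_i^k + y_j^k) − (b_i + p_i^{k+1}); (x_i^{k+1}, t_i^{k+1}) is a global minimizer over (x_i, t_i) ∈ ℝ^{n_i} × K of f_i(x_i) + (1/(4 ρ d_i)) ‖A_i x_i + r_i^{k+1} − t_i‖²; and y_i^{k+1} = (1/(2 ρ d_i)) Π_{K∘}(A_i x_i^{k+1} + r_i^{k+1}). If there is y* ∈ ℝ^m with y_i^k → y* for every i ∈ 𝒩, then: (i) w^k := ∑_{i∈𝒩} t_i^k ∈ K for every k ≥ 1; and (ii) ∑_{i∈𝒩} (A_i x_i^k − b_i)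 − w^k → 0 as k → ∞. -/
open Filter Topology RealInnerProductSpace

section MyAux
variable {E : Type*} [NormedAddCommGroup E] [InnerProductSpace ℝ E]

lemma myPolar_convex (C : Set E) : Convex ℝ (polarSet C) := by
  intro y1 hy1 y2 hy2 a b ha hb hab x hx
  have h1 := hy1 x hx
  have h2 := hy2 x hx
  simp only [inner_add_right, real_inner_smul_right]
  nlinarith

lemma myMin_variational {C : Set E} (hC : Convex ℝ C) {z a : E} (ha : a ∈ C)
    (hm : ∀ q ∈ C, ‖z - a‖ ≤ ‖z - q‖) : ∀ w ∈ C, ⟪z - a, w - a⟫ ≤ 0 := by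
  haveI : Nonempty C := ⟨⟨a, ha⟩⟩
  have : ‖z - a‖ = ⨅ w : C, ‖z - w‖ := by
    refine le_antisymm (le_ciInf fun w => hm w w.2) ?_
    have hbdd : BddBelow (Set.range fun w : C => ‖z - w‖) := by
      refine ⟨0, ?_⟩; rintro _ ⟨w, rfl⟩; exact norm_nonneg _
    exact ciInf_le hbdd ⟨a, ha⟩
  exact (norm_eq_iInf_iff_real_inner_le_zero hC ha).1 this

lemma myVariational_min {C : Set E} (hC : Convex ℝ C) {z a : E} (ha : a ∈ C)
    (hv : ∀ w ∈ C, ⟪z - a, w - a⟫ ≤ 0) : ∀ q ∈ C, ‖z - a‖ ≤ ‖z - q‖ := by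
  intro q hq
  haveI : Nonempty C := ⟨⟨a, ha⟩⟩
  have heq := (norm_eq_iInf_iff_real_inner_le_zero hC ha).2 hv
  calc ‖z - a‖ = ⨅ w : C, ‖z - w‖ := heq
    _ ≤ ‖z - q‖ := by
        have hbdd : BddBelow (Set.range fun w : C => ‖z - w‖) := by
          refine ⟨0, ?_⟩; rintro _ ⟨w, rfl⟩; exact norm_nonneg _
        exact ciInf_le hbdd ⟨q, hq⟩

lemma myProjSet_eq {C : Set E} (hC : Convex ℝ C) {z p : E} (hp : p ∈ C)
    (hmin : ∀ q ∈ C, ‖z - p‖ ≤ ‖z - q‖) : projSet C z = p := by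
  classical
  have hex : ∃ a ∈ C, ∀ q ∈ C, ‖z - a‖ ≤ ‖z - q‖ := ⟨p, hp, hmin⟩
  rw [projSet, dif_pos hex]
  obtain ⟨hp', hmin'⟩ := hex.choose_spec
  set q := hex.choose with hq
  have h1 := myMin_variational hC hp hmin q hp'
  have h2 := myMin_variational hC hp' hmin' p hp
  have e3 : (z - p) - (z - q) = q - p := by abel
  have e4 : ⟪(z - p) - (z - q), q - p⟫ = ⟪z - p, q - p⟫ - ⟪z - q, q - p⟫ :=
    inner_sub_left _ _ _
  have e5 : ⟪z - q, p - q⟫ = -⟪z - q, q - p⟫ := by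
    rw [show p - q = -(q - p) by abel, inner_neg_right]
  rw [e3] at e4
  have key : ⟪q - p, q - p⟫ ≤ 0 := by rw [e4]; linarith
  have : q - p = 0 := by
    have := real_inner_self_nonpos.1 key
    exact this
  have : q = p := by
    have := sub_eq_zero.1 this
    exact this
  exact this

lemma myMoreau {K : Set E} (hne : K.Nonempty) (hcl : IsClosed K) (hKconv : Convex ℝ K)
    (hcone : ∀ c : ℝ, 0 < c → ∀ x ∈ K, c • x ∈ K) {z T : E} (hT : T ∈ K)
    (hmin : ∀ q ∈ K, ‖z - T‖ ≤ ‖z - q‖) : projSet (polarSet K) z = z - T := by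
  obtain ⟨x0, hx0⟩ := hne
  have h0K : (0 : E) ∈ K := by
    have hseq : ∀ n : ℕ, (1 / ((n : ℝ) + 1)) • x0 ∈ K := fun n => hcone _ (by positivity) _ hx0
    have hl : Tendsto (fun n : ℕ => (1 / ((n : ℝ) + 1)) • x0) atTop (nhds 0) := by
      have h : Tendsto (fun n : ℕ => 1 / ((n : ℝ) + 1)) atTop (nhds 0) :=
        tendsto_one_div_add_atTop_nhds_zero_nat
      simpa using h.smul_const x0
    exact hcl.mem_of_tendsto hl (Filter.Eventually.of_forall hseq)
  have hvar := myMin_variational hKconv hT hmin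
  have horth : ⟪z - T, T⟫ = 0 := by
    have h2K : (2 : ℝ) • T ∈ K := hcone 2 two_pos T hT
    have ha := hvar _ h2K
    rw [show (2 : ℝ) • T - T = T by module] at ha
    have hb := hvar 0 h0K
    rw [zero_sub, inner_neg_right] at hb
    linarith
  have hmem : z - T ∈ polarSet K := by
    intro w hw
    have h := hvar w hw
    rw [inner_sub_right] at h
    rw [real_inner_comm]
    linarith
  refine myProjSet_eq (myPolar_convex K) hmem ?_
  refine myVariational_min (myPolar_convex K) hmem ?_
  intro w hw
  rw [show z - (z - T) = T by abel, inner_sub_right]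
  have h1 : ⟪T, w⟫ ≤ 0 := hw T hT
  have h2 : ⟪T, z - T⟫ = 0 := by rw [real_inner_comm]; exact horth
  linarith

end MyAux

/-- **Asymptotic primal feasibility of the aggregate dual consensus ADMM.**
If the dual iterates `yᵢᵏ` all converge to some `y*`, then `wᵏ := ∑ᵢ tᵢᵏ ∈ K`
for all `k ≥ 1` and `∑ᵢ(Aᵢxᵢᵏ − bᵢ) − wᵏ → 0`. -/
theorem aggregate_admm_asymptotic_feasibility
    {N : Type*} [Fintype N] [Nonempty N] {m : ℕ} {n : N → ℕ}
    (G : SimpleGraph N) [DecidableRel G.Adj] (hdeg : ∀ i, 1 ≤ G.degree i)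
    (f : ∀ i, EuclideanSpace ℝ (Fin (n i)) → EReal)
    (hconv : ∀ i, EConvexFn (f i)) (hlsc : ∀ i, LowerSemicontinuous (f i))
    (hproper : ∀ i, EProper (f i))
    (A : ∀ i, EuclideanSpace ℝ (Fin (n i)) →ₗ[ℝ] EuclideanSpace ℝ (Fin m))
    (b : N → EuclideanSpace ℝ (Fin m))
    (K : Set (EuclideanSpace ℝ (Fin m)))
    (hne : K.Nonempty) (hcl : IsClosed K) (hKconv : Convex ℝ K)
    (hcone : ∀ c : ℝ, 0 < c → ∀ x ∈ K, c • x ∈ K)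
    (ρ : ℝ) (hρ : 0 < ρ)
    (p r y t : N → ℕ → EuclideanSpace ℝ (Fin m))
    (x : ∀ i, ℕ → EuclideanSpace ℝ (Fin (n i)))
    (hp0 : ∀ i, p i 0 = 0)
    (hp : ∀ i k, p i (k + 1)
      = p i k + ρ • ∑ j ∈ G.neighborFinset i, (y i k - y j k))
    (hr : ∀ i k, r i (k + 1)
      = ρ • ∑ j ∈ G.neighborFinset i, (y i k + y j k) - (b i + p i (k + 1)))
    (hmin : ∀ i k, t i (k + 1) ∈ K ∧
      ∀ xi : EuclideanSpace ℝ (Fin (n i)), ∀ ti ∈ K,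
        f i (x i (k + 1)) + (((1 / (4 * ρ * (G.degree i : ℝ)))
            * ‖A i (x i (k + 1)) + r i (k + 1) - t i (k + 1)‖ ^ 2 : ℝ) : EReal)
          ≤ f i xi + (((1 / (4 * ρ * (G.degree i : ℝ)))
            * ‖A i xi + r i (k + 1) - ti‖ ^ 2 : ℝ) : EReal))
    (hy : ∀ i k, y i (k + 1)
      = (1 / (2 * ρ * (G.degree i : ℝ)))
          • projSet (polarSet K) (A i (x i (k + 1)) + r i (k + 1)))
    (ystar : EuclideanSpace ℝ (Fin m))
    (hlim : ∀ i, Tendsto (fun k => y i k) atTop (nhds ystar)) :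
    (∀ k, 1 ≤ k → (∑ i, t i k) ∈ K) ∧
    Tendsto (fun k => (∑ i, (A i (x i k) - b i)) - ∑ i, t i k) atTop (nhds 0) := by
  classical
  have hd : ∀ i, (0 : ℝ) < (G.degree i : ℝ) := fun i => by
    have := hdeg i; exact_mod_cast Nat.lt_of_lt_of_le Nat.zero_lt_one this
  -- K is closed under addition
  have hKadd : ∀ a ∈ K, ∀ c ∈ K, a + c ∈ K := by
    intro a ha c hc
    have hmid : (1/2 : ℝ) • a + (1/2 : ℝ) • c ∈ K :=
      hKconv ha hc (by norm_num) (by norm_num) (by norm_num)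
    have h2 := hcone 2 two_pos _ hmid
    rwa [show (2:ℝ) • ((1/2:ℝ) • a + (1/2:ℝ) • c) = a + c by module] at h2
  have part1 : ∀ k, 1 ≤ k → (∑ i, t i k) ∈ K := by
    intro k hk
    obtain ⟨k', rfl⟩ : ∃ k', k = k' + 1 := ⟨k - 1, by omega⟩
    exact Finset.sum_induction_nonempty _ (· ∈ K) (fun a c ha hc => hKadd a ha c hc)
      Finset.univ_nonempty (fun i _ => (hmin i k').1)
  -- minimality of t over K
  have htmin : ∀ i k, ∀ q ∈ K,
      ‖A i (x i (k+1)) + r i (k+1) - t i (k+1)‖ ≤ ‖A i (x i (k+1)) + r i (k+1) - q‖ := by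
    intro i k q hq
    have hcpos : 0 < 1 / (4 * ρ * (G.degree i : ℝ)) := by
      have := hd i; positivity
    have hfX : f i (x i (k+1)) ≠ ⊤ := by
      obtain ⟨x0, hx0⟩ := (hproper i).2
      have h1 := (hmin i k).2 x0 (t i (k+1)) (hmin i k).1
      intro htop
      rw [htop, EReal.top_add_coe] at h1
      have hb0 := (hproper i).1 x0
      have hfin : f i x0 = ((f i x0).toReal : EReal) := (EReal.coe_toReal hx0 hb0).symm
      rw [hfin, ← EReal.coe_add] at h1
      exact (EReal.coe_lt_top _).not_ge h1
    have hfb := (hproper i).1 (x i (k+1))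
    have hXr : f i (x i (k+1)) = ((f i (x i (k+1))).toReal : EReal) :=
      (EReal.coe_toReal hfX hfb).symm
    have h2 := (hmin i k).2 (x i (k+1)) q hq
    rw [hXr, ← EReal.coe_add, ← EReal.coe_add] at h2
    have h3 : (f i (x i (k+1))).toReal
          + 1 / (4 * ρ * (G.degree i : ℝ)) * ‖A i (x i (k+1)) + r i (k+1) - t i (k+1)‖ ^ 2
        ≤ (f i (x i (k+1))).toReal
          + 1 / (4 * ρ * (G.degree i : ℝ)) * ‖A i (x i (k+1)) + r i (k+1) - q‖ ^ 2 := by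
      exact_mod_cast h2
    have h4 : ‖A i (x i (k+1)) + r i (k+1) - t i (k+1)‖ ^ 2
        ≤ ‖A i (x i (k+1)) + r i (k+1) - q‖ ^ 2 :=
      le_of_mul_le_mul_left (by linarith) hcpos
    have h5 := Real.sqrt_le_sqrt h4
    rwa [Real.sqrt_sq (norm_nonneg _), Real.sqrt_sq (norm_nonneg _)] at h5
  -- key identity
  have hkey : ∀ i k, A i (x i (k+1)) + r i (k+1) - t i (k+1)
      = (2 * ρ * (G.degree i : ℝ)) • y i (k+1) := by
    intro i k
    have hproj := myMoreau hne hcl hKconv hcone (hmin i k).1 (htmin i k)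
    have hne' : (2 * ρ * (G.degree i : ℝ)) * (1 / (2 * ρ * (G.degree i : ℝ))) = 1 := by
      have := hd i
      field_simp
    rw [hy i k, smul_smul, hne', one_smul, hproj]
  -- swap lemma
  have hswap : ∀ v : N → EuclideanSpace ℝ (Fin m),
      ∑ i, ∑ j ∈ G.neighborFinset i, v j = ∑ i, ∑ j ∈ G.neighborFinset i, v i := by
    intro v
    exact Finset.sum_comm' (by
      intro a c
      simp only [Finset.mem_univ, true_and, and_true, SimpleGraph.mem_neighborFinset]
      exact G.adj_comm a c)
  have hpsum : ∀ k, ∑ i, p i k = 0 := by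
    intro k
    induction k with
    | zero => simp [hp0]
    | succ k ih =>
      have hz : ∑ i, ∑ j ∈ G.neighborFinset i, (y i k - y j k) = 0 := by
        have e : ∀ i, ∑ j ∈ G.neighborFinset i, (y i k - y j k)
            = ∑ j ∈ G.neighborFinset i, y i k - ∑ j ∈ G.neighborFinset i, y j k :=
          fun i => Finset.sum_sub_distrib _ _
        simp only [e]
        rw [Finset.sum_sub_distrib, hswap (fun j => y j k), sub_self]
      simp only [hp]
      rw [Finset.sum_add_distrib, ih, ← Finset.smul_sum, hz]; simp
  -- per-agent identity
  have hid : ∀ i k, A i (x i (k+1)) - b i - t i (k+1)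
      = ((2 * ρ * (G.degree i : ℝ)) • y i (k+1)
          - ρ • ∑ j ∈ G.neighborFinset i, (y i k + y j k)) + p i (k+1) := by
    intro i k
    have h := hkey i k
    rw [hr i k] at h
    have h2 : A i (x i (k+1)) - b i - t i (k+1)
        = (A i (x i (k+1)) + (ρ • ∑ j ∈ G.neighborFinset i, (y i k + y j k)
            - (b i + p i (k+1))) - t i (k+1))
          - ρ • ∑ j ∈ G.neighborFinset i, (y i k + y j k) + p i (k+1) := by abel
    rw [h2, h]
  -- sum identity
  have hDsum : ∀ k, (∑ i, (A i (x i (k+1)) - b i)) - ∑ i, t i (k+1)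
      = ∑ i, ((2 * ρ * (G.degree i : ℝ)) • y i (k+1)
          - ρ • ∑ j ∈ G.neighborFinset i, (y i k + y j k)) := by
    intro k
    rw [← Finset.sum_sub_distrib]
    simp only [hid]
    rw [Finset.sum_add_distrib, hpsum (k+1), add_zero]
  -- limits
  have hg : ∀ i, Tendsto (fun k => (2 * ρ * (G.degree i : ℝ)) • y i (k+1)
      - ρ • ∑ j ∈ G.neighborFinset i, (y i k + y j k)) atTop (nhds 0) := by
    intro i
    have h1 : Tendsto (fun k => y i (k+1)) atTop (nhds ystar) :=
      (tendsto_add_atTop_iff_nat 1).2 (hlim i)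
    have h2 := h1.const_smul (2 * ρ * (G.degree i : ℝ))
    have h3 : Tendsto (fun k => ∑ j ∈ G.neighborFinset i, (y i k + y j k)) atTop
        (nhds (∑ j ∈ G.neighborFinset i, (ystar + ystar))) :=
      tendsto_finset_sum _ fun j _ => (hlim i).add (hlim j)
    have h4 := h2.sub (h3.const_smul ρ)
    have e : (2 * ρ * (G.degree i : ℝ)) • ystar
        - ρ • ∑ j ∈ G.neighborFinset i, (ystar + ystar) = 0 := by
      rw [Finset.sum_const, SimpleGraph.card_neighborFinset_eq_degree,
        ← Nat.cast_smul_eq_nsmul ℝ]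
      module
    rwa [e] at h4
  have hT2 : Tendsto (fun k => (∑ i, (A i (x i (k+1)) - b i)) - ∑ i, t i (k+1))
      atTop (nhds 0) := by
    have hsum0 : Tendsto (fun k => ∑ i, ((2 * ρ * (G.degree i : ℝ)) • y i (k+1)
        - ρ • ∑ j ∈ G.neighborFinset i, (y i k + y j k))) atTop (nhds 0) := by
      simpa using tendsto_finset_sum Finset.univ (fun i (_ : i ∈ Finset.univ) => hg i)
    exact hsum0.congr fun k => (hDsum k).symm
  exact ⟨part1, (tendsto_add_atTop_iff_nat 1).1 hT2⟩
end

section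
/- Asymptotic primal feasibility of the decomposed dual consensus ADMM. Let σ > 0, ρ > 0 and suppose, for each i ∈ 𝒩, the sequences satisfy p_i^0 = 0 and, for all k ≥ 0: p_i^{k+1} = p_i^k + ρ ∑_{j∈𝒩_i} (y_i^k − y_j^k); s_i^{k+1} = s_i^k + σ (y_i^k − z_i^k); r_i^{k+1} = σ z_i^k + ρ ∑_{j∈𝒩_i} (y_i^k + y_j^k) − (b_i + p_i^{k+1} + s_i^{k+1}); x_i^{k+1} is a global minimizer over x_i ∈ ℝ^{n_i} of f_i(x_i) + (1/(2(σ + 2 ρ d_i))) ‖A_i x_i + r_i^{k+1}‖²; y_i^{k+1} = (A_i x_i^{k+1} + r_i^{k+1})/(σ + 2 ρ d_i); and z_i^{k+1} = Π_{K∘}(y_i^{k+1} + (1/σ) s_i^{k+1}). If there is y* ∈ ℝ^m with y_i^k → y* and z_i^k → y* for every i ∈ 𝒩, then ∑_{i∈𝒩} (A_i x_i^k − b_i) − ∑_{i∈𝒩} s_i^k → 0 as k → ∞. -/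
open Filter Topology RealInnerProductSpace

lemma sum_nbr_smul {N : Type*} [Fintype N] (G : SimpleGraph N) [DecidableRel G.Adj]
    {E : Type*} [AddCommGroup E] (g : N → E) :
    ∑ i, ∑ j ∈ G.neighborFinset i, g j = ∑ i, (G.degree i) • g i := by
  have h1 : ∀ i : N, ∑ j ∈ G.neighborFinset i, g j
      = ∑ j, if G.Adj i j then g j else 0 := by
    intro i
    rw [SimpleGraph.neighborFinset_eq_filter, Finset.sum_filter]
  simp only [h1]
  rw [Finset.sum_comm]
  congr 1
  ext j
  have : ∀ i : N, (if G.Adj i j then g j else 0) = (if G.Adj j i then g j else 0) := by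
    intro i; simp [G.adj_comm i j]
  simp only [this]
  rw [← Finset.sum_filter, Finset.sum_const]
  congr 1
  rw [SimpleGraph.degree, SimpleGraph.neighborFinset_eq_filter]

lemma sum_nbr_diff {N : Type*} [Fintype N] (G : SimpleGraph N) [DecidableRel G.Adj]
    {E : Type*} [AddCommGroup E] (g : N → E) :
    ∑ i, ∑ j ∈ G.neighborFinset i, (g i - g j) = 0 := by
  simp only [Finset.sum_sub_distrib, Finset.sum_const, SimpleGraph.card_neighborFinset_eq_degree]
  rw [sum_nbr_smul]
  exact sub_self _

/-- **Asymptotic primal feasibility of the decomposed dual consensus ADMM.**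
If the iterates `yᵢᵏ` and `zᵢᵏ` all converge to some `y*`, then
`∑ᵢ(Aᵢxᵢᵏ − bᵢ) − ∑ᵢ sᵢᵏ → 0`. -/
theorem decomposed_admm_asymptotic_feasibility
    {N : Type*} [Fintype N] [Nonempty N] {m : ℕ} {n : N → ℕ}
    (G : SimpleGraph N) [DecidableRel G.Adj] (hdeg : ∀ i, 1 ≤ G.degree i)
    (f : ∀ i, EuclideanSpace ℝ (Fin (n i)) → EReal)
    (hconv : ∀ i, EConvexFn (f i)) (hlsc : ∀ i, LowerSemicontinuous (f i))
    (hproper : ∀ i, EProper (f i))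
    (A : ∀ i, EuclideanSpace ℝ (Fin (n i)) →ₗ[ℝ] EuclideanSpace ℝ (Fin m))
    (b : N → EuclideanSpace ℝ (Fin m))
    (K : Set (EuclideanSpace ℝ (Fin m)))
    (hne : K.Nonempty) (hcl : IsClosed K) (hKconv : Convex ℝ K)
    (hcone : ∀ c : ℝ, 0 < c → ∀ x ∈ K, c • x ∈ K)
    (σ ρ : ℝ) (hσ : 0 < σ) (hρ : 0 < ρ)
    (p s r y z : N → ℕ → EuclideanSpace ℝ (Fin m))
    (x : ∀ i, ℕ → EuclideanSpace ℝ (Fin (n i)))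
    (hp0 : ∀ i, p i 0 = 0)
    (hp : ∀ i k, p i (k + 1)
      = p i k + ρ • ∑ j ∈ G.neighborFinset i, (y i k - y j k))
    (hs : ∀ i k, s i (k + 1) = s i k + σ • (y i k - z i k))
    (hr : ∀ i k, r i (k + 1)
      = σ • z i k + ρ • ∑ j ∈ G.neighborFinset i, (y i k + y j k)
        - (b i + p i (k + 1) + s i (k + 1)))
    (hmin : ∀ i k, ∀ xi : EuclideanSpace ℝ (Fin (n i)),
      f i (x i (k + 1)) + (((1 / (2 * (σ + 2 * ρ * (G.degree i : ℝ))))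
          * ‖A i (x i (k + 1)) + r i (k + 1)‖ ^ 2 : ℝ) : EReal)
        ≤ f i xi + (((1 / (2 * (σ + 2 * ρ * (G.degree i : ℝ))))
          * ‖A i xi + r i (k + 1)‖ ^ 2 : ℝ) : EReal))
    (hy : ∀ i k, y i (k + 1)
      = (1 / (σ + 2 * ρ * (G.degree i : ℝ))) • (A i (x i (k + 1)) + r i (k + 1)))
    (hz : ∀ i k, z i (k + 1)
      = projSet (polarSet K) (y i (k + 1) + (1 / σ) • s i (k + 1)))
    (ystar : EuclideanSpace ℝ (Fin m))
    (hylim : ∀ i, Tendsto (fun k => y i k) atTop (nhds ystar))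
    (hzlim : ∀ i, Tendsto (fun k => z i k) atTop (nhds ystar)) :
    Tendsto (fun k => (∑ i, (A i (x i k) - b i)) - ∑ i, s i k) atTop (nhds 0) := by
  set c : N → ℝ := fun i => σ + 2 * ρ * (G.degree i : ℝ) with hc
  have hcpos : ∀ i, 0 < c i := by
    intro i
    have : (0:ℝ) ≤ 2 * ρ * (G.degree i : ℝ) := by positivity
    simp only [hc]; linarith
  -- key per-index identity
  have key : ∀ i k, A i (x i (k+1)) - b i - s i (k+1)
      = c i • y i (k+1) - σ • z i k - ρ • ∑ j ∈ G.neighborFinset i, (y i k + y j k)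
        + p i (k+1) := by
    intro i k
    have hAx : A i (x i (k+1)) = c i • y i (k+1) - r i (k+1) := by
      rw [hy i k, smul_smul]
      have : c i * (1 / c i) = 1 := by
        exact mul_one_div_cancel (hcpos i).ne'
      rw [this, one_smul]
      abel
    rw [hAx, hr i k]
    abel
  -- sum of p is always 0
  have hpsum : ∀ k, ∑ i, p i k = 0 := by
    intro k
    induction k with
    | zero => simp [hp0]
    | succ k ih =>
      simp only [hp]
      rw [Finset.sum_add_distrib, ih, ← Finset.smul_sum, sum_nbr_diff]
      simp
  -- the shifted sequence
  have hshift : ∀ k, (∑ i, (A i (x i (k+1)) - b i)) - ∑ i, s i (k+1)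
      = ∑ i, (c i • y i (k+1) - σ • z i k
          - ρ • ∑ j ∈ G.neighborFinset i, (y i k + y j k)) := by
    intro k
    have : (∑ i, (A i (x i (k+1)) - b i)) - ∑ i, s i (k+1)
        = ∑ i, (A i (x i (k+1)) - b i - s i (k+1)) := by
      rw [← Finset.sum_sub_distrib]
    rw [this]
    simp only [key]
    rw [Finset.sum_add_distrib, hpsum]
    simp
  -- limits of each summand
  have hterm : ∀ i : N, Tendsto (fun k => c i • y i (k+1) - σ • z i k
      - ρ • ∑ j ∈ G.neighborFinset i, (y i k + y j k)) atTop (nhds 0) := by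
    intro i
    have h0 : Tendsto (fun k => y i (k+1)) atTop (nhds ystar) :=
      (hylim i).comp (tendsto_add_atTop_nat 1)
    have h1 : Tendsto (fun k => c i • y i (k+1)) atTop (nhds (c i • ystar)) :=
      h0.const_smul _
    have h2 : Tendsto (fun k => σ • z i k) atTop (nhds (σ • ystar)) :=
      (hzlim i).const_smul _
    have h3 : Tendsto (fun k => ∑ j ∈ G.neighborFinset i, (y i k + y j k)) atTop
        (nhds (∑ j ∈ G.neighborFinset i, (ystar + ystar))) :=
      tendsto_finset_sum _ (fun j _ => (hylim i).add (hylim j))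
    have h3' : Tendsto (fun k => ρ • ∑ j ∈ G.neighborFinset i, (y i k + y j k)) atTop
        (nhds (ρ • ∑ j ∈ G.neighborFinset i, (ystar + ystar))) := h3.const_smul _
    have hzero : c i • ystar - σ • ystar - ρ • ∑ j ∈ G.neighborFinset i, (ystar + ystar)
        = 0 := by
      rw [Finset.sum_const, SimpleGraph.card_neighborFinset_eq_degree,
        ← Nat.cast_smul_eq_nsmul ℝ]
      simp only [hc]
      module
    have := (h1.sub h2).sub h3'
    rwa [hzero] at this
  have hsum : Tendsto (fun k => ∑ i, (c i • y i (k+1) - σ • z i k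
      - ρ • ∑ j ∈ G.neighborFinset i, (y i k + y j k))) atTop (nhds 0) := by
    have := tendsto_finset_sum (Finset.univ : Finset N) (fun i _ => hterm i)
    simpa using this
  have hshifted : Tendsto (fun k => (∑ i, (A i (x i (k+1)) - b i)) - ∑ i, s i (k+1))
      atTop (nhds 0) := by
    simp only [hshift]; exact hsum
  exact (tendsto_add_atTop_iff_nat 1).mp hshifted
end
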